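/- Let f: 𝒳^n → ℝ^k have L₂-sensitivity at most Δ₂ > 0, let σ > 0 and ε ≥ 0, and suppose δ ≥ Φ(Δ₂/(2σ) − εσ/Δ₂) − e^ε Φ(−Δ₂/(2σ) − εσ/Δ₂), where Φ is the cumulative distribution function of the standard Gaussian distribution. Then the Gaussian mechanism M(X) = f(X) + N(0, σ²I_k) is (ε, δ)-differentially private: for all neighbouring datasets X, X' ∈ 𝒳^n and all measurable S ⊆ ℝ^k, P(M(X) ∈ S) ≤ e^ε P(M(X') ∈ S) + δ. -/

import Mathlib

open MeasureTheory ProbabilityTheory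
open scoped BigOperators ENNReal

open Real
open scoped NNReal

/-- The cumulative distribution function `Φ` of the standard Gaussian distribution. -/
noncomputable def stdGaussianCDF (z : ℝ) : ℝ := (gaussianReal 0 1 (Set.Iic z)).toReal

/-- Lintegral of a product of functions of separate coordinates over a pi measure. -/
lemma lintegral_fin_prod : ∀ {n : ℕ} (μ : Fin n → Measure ℝ), (∀ i, SigmaFinite (μ i)) →
    ∀ (f : Fin n → ℝ → ℝ≥0∞), (∀ i, Measurable (f i)) →
    ∫⁻ x : Fin n → ℝ, ∏ i, f i (x i) ∂Measure.pi μ = ∏ i, ∫⁻ t, f i t ∂μ i := by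
  intro n
  induction n with
  | zero =>
      intro μ _ f _
      rw [Measure.pi_of_empty]
      simp
  | succ n ih =>
      intro μ hμ f hf
      have := (measurePreserving_piFinSuccAbove μ 0).symm
      rw [← this.map_eq, MeasureTheory.lintegral_map _ (this.measurable)]
      · simp_rw [MeasurableEquiv.piFinSuccAbove_symm_apply, Fin.insertNthEquiv,
          Fin.prod_univ_succ, Fin.insertNth_zero, Equiv.coe_fn_mk, Fin.cons_zero, Fin.cons_succ, cast_eq,
          Fin.zero_succAbove]
        rw [lintegral_prod_mul (f := f 0) (g := fun w : Fin n → ℝ => ∏ x : Fin n, f x.succ (w x))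
          (hf 0).aemeasurable]
        · rw [ih _ (fun j => hμ _) _ (fun j => hf _)]
        · exact (Finset.measurable_prod Finset.univ
            (fun j _ => (hf j.succ).comp (measurable_pi_apply j))).aemeasurable
      · exact Finset.measurable_prod Finset.univ
          (fun i _ => (hf i).comp (measurable_pi_apply i))

/-- A product of gaussians as a density w.r.t. Lebesgue measure. -/
lemma pi_gaussian_withDensity {n : ℕ} (a : Fin n → ℝ) {v : ℝ≥0} (hv : v ≠ 0) :
    Measure.pi (fun i => gaussianReal (a i) v)
      = (Measure.pi fun _ : Fin n => (volume : Measure ℝ)).withDensity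
          (fun x => ∏ i, gaussianPDF (a i) v (x i)) := by
  refine Measure.pi_eq fun s hs => ?_
  set f : Fin n → ℝ → ℝ≥0∞ := fun i => gaussianPDF (a i) v with hfdef
  have hf : ∀ i, Measurable (f i) := fun i => measurable_gaussianPDF _ _
  rw [withDensity_apply _ (MeasurableSet.univ_pi hs)]
  have hind : ∀ x : Fin n → ℝ,
      (Set.pi Set.univ s).indicator (fun x => ∏ i, f i (x i)) x
        = ∏ i, (s i).indicator (f i) (x i) := by
    intro x
    by_cases hx : x ∈ Set.pi Set.univ s
    · rw [Set.indicator_of_mem hx]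
      exact Finset.prod_congr rfl fun i _ =>
        (Set.indicator_of_mem (hx i (Set.mem_univ i)) _).symm
    · rw [Set.indicator_of_notMem hx]
      simp only [Set.mem_pi, Set.mem_univ, forall_true_left, not_forall] at hx
      obtain ⟨i, hi⟩ := hx
      exact (Finset.prod_eq_zero (Finset.mem_univ i)
        (Set.indicator_of_notMem hi _)).symm
  rw [← lintegral_indicator (MeasurableSet.univ_pi hs)]
  calc ∫⁻ x, (Set.pi Set.univ s).indicator (fun x => ∏ i, f i (x i)) x
        ∂(Measure.pi fun _ : Fin n => (volume : Measure ℝ))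
      = ∫⁻ x, ∏ i, (s i).indicator (f i) (x i)
        ∂(Measure.pi fun _ : Fin n => (volume : Measure ℝ)) := lintegral_congr hind
    _ = ∏ i, ∫⁻ t, (s i).indicator (f i) t := by
        exact lintegral_fin_prod _ (fun i => inferInstance) _
          (fun i => (hf i).indicator (hs i))
    _ = ∏ i, gaussianReal (a i) v (s i) := by
        refine Finset.prod_congr rfl fun i _ => ?_
        rw [lintegral_indicator (hs i), gaussianReal_of_var_ne_zero _ hv,
          withDensity_apply _ (hs i)]

/-- A product of gaussians applied to a set. -/
lemma pi_gaussian_apply {n : ℕ} (a : Fin n → ℝ) {v : ℝ≥0} (hv : v ≠ 0)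
    {S : Set (Fin n → ℝ)} (hS : MeasurableSet S) :
    Measure.pi (fun i => gaussianReal (a i) v) S
      = ∫⁻ x in S, ∏ i, gaussianPDF (a i) v (x i)
          ∂(Measure.pi fun _ : Fin n => (volume : Measure ℝ)) := by
  rw [pi_gaussian_withDensity a hv, withDensity_apply _ hS]

/-- Pointwise completing-the-square identity for a product of gaussian densities. -/
lemma gaussianPDFReal_mul_gaussianPDFReal (m₁ m₂ t u : ℝ) {v₁ v₂ : ℝ≥0}
    (h₁ : v₁ ≠ 0) (h₂ : v₂ ≠ 0) :
    gaussianPDFReal m₁ v₁ u * gaussianPDFReal m₂ v₂ (t - u)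
      = gaussianPDFReal (m₁ + m₂) (v₁ + v₂) t
        * gaussianPDFReal ((m₁ * v₂ + (t - m₂) * v₁) / (v₁ + v₂)) (v₁ * v₂ / (v₁ + v₂)) u := by
  have hw₁ : (0 : ℝ) < v₁ := lt_of_le_of_ne (v₁.coe_nonneg) (by exact_mod_cast (Ne.symm h₁))
  have hw₂ : (0 : ℝ) < v₂ := lt_of_le_of_ne (v₂.coe_nonneg) (by exact_mod_cast (Ne.symm h₂))
  have hsum : (0 : ℝ) < (v₁ : ℝ) + v₂ := by linarith
  simp only [gaussianPDFReal, NNReal.coe_add, NNReal.coe_mul, NNReal.coe_div]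
  rw [mul_mul_mul_comm, mul_mul_mul_comm ((Real.sqrt (2 * π * ((v₁:ℝ) + v₂)))⁻¹)]
  congr 1
  · rw [← mul_inv, ← mul_inv, ← Real.sqrt_mul (by positivity), ← Real.sqrt_mul (by positivity)]
    congr 2
    field_simp
  · rw [← Real.exp_add, ← Real.exp_add]
    congr 1
    field_simp
    ring

/-- The sum of two independent gaussians is gaussian. -/
lemma map_add_gaussian (m₁ m₂ : ℝ) (v₁ v₂ : ℝ≥0) :
    ((gaussianReal m₁ v₁).prod (gaussianReal m₂ v₂)).map (fun p => p.1 + p.2)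
      = gaussianReal (m₁ + m₂) (v₁ + v₂) := by
  by_cases h₁ : v₁ = 0
  · subst h₁
    rw [gaussianReal_zero_var, Measure.dirac_prod,
      Measure.map_map measurable_add (measurable_prodMk_left), zero_add]
    have : ((fun p : ℝ × ℝ => p.1 + p.2) ∘ fun b => (m₁, b)) = fun b => m₁ + b := rfl
    rw [this, gaussianReal_map_const_add, add_comm m₂ m₁]
  by_cases h₂ : v₂ = 0
  · subst h₂
    rw [gaussianReal_zero_var, Measure.prod_dirac,
      Measure.map_map measurable_add (measurable_prodMk_right), add_zero]
    have : ((fun p : ℝ × ℝ => p.1 + p.2) ∘ fun a => (a, m₂)) = fun a => a + m₂ := rfl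
    rw [this, gaussianReal_map_add_const]
  -- main case
  have hsum : v₁ + v₂ ≠ 0 := by
    intro h; rw [add_eq_zero] at h; exact h₁ h.1
  refine Measure.ext fun s hs => ?_
  rw [Measure.map_apply measurable_add hs, Measure.prod_apply (measurable_add hs)]
  have step1 : ∀ u : ℝ, gaussianReal m₂ v₂ (Prod.mk u ⁻¹' ((fun p : ℝ × ℝ => p.1 + p.2) ⁻¹' s))
      = ∫⁻ t in s, gaussianPDF m₂ v₂ (t - u) ∂volume := by
    intro u
    have : Prod.mk u ⁻¹' ((fun p : ℝ × ℝ => p.1 + p.2) ⁻¹' s) = (fun w => u + w) ⁻¹' s := rfl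
    rw [this, ← Measure.map_apply (measurable_const_add u) hs,
      gaussianReal_map_const_add, gaussianReal_apply _ h₂ s]
    refine setLIntegral_congr_fun hs (fun t _ => ?_)
    simp only [gaussianPDF_def]
    congr 1
    simp only [gaussianPDFReal]
    ring_nf
  calc ∫⁻ u, gaussianReal m₂ v₂ (Prod.mk u ⁻¹' ((fun p : ℝ × ℝ => p.1 + p.2) ⁻¹' s))
        ∂gaussianReal m₁ v₁
      = ∫⁻ u, ∫⁻ t in s, gaussianPDF m₂ v₂ (t - u) ∂volume ∂gaussianReal m₁ v₁ :=
        lintegral_congr step1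
    _ = ∫⁻ u, gaussianPDF m₁ v₁ u * ∫⁻ t in s, gaussianPDF m₂ v₂ (t - u) ∂volume ∂volume := by
        rw [gaussianReal_of_var_ne_zero _ h₁,
          lintegral_withDensity_eq_lintegral_mul _ (measurable_gaussianPDF _ _)]
        · rfl
        · exact Measurable.lintegral_prod_right
            ((measurable_gaussianPDF m₂ v₂).comp (measurable_snd.sub measurable_fst))
    _ = ∫⁻ u, ∫⁻ t in s, gaussianPDF m₁ v₁ u * gaussianPDF m₂ v₂ (t - u) ∂volume ∂volume := by
        refine lintegral_congr fun u => ?_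
        exact (lintegral_const_mul _
          ((measurable_gaussianPDF m₂ v₂).comp (by fun_prop : Measurable fun t : ℝ => t - u))).symm
    _ = ∫⁻ t in s, ∫⁻ u, gaussianPDF m₁ v₁ u * gaussianPDF m₂ v₂ (t - u) ∂volume ∂volume := by
        refine lintegral_lintegral_swap ?_
        exact (((measurable_gaussianPDF m₁ v₁).comp measurable_fst).mul
          ((measurable_gaussianPDF m₂ v₂).comp (measurable_snd.sub measurable_fst))).aemeasurable
    _ = ∫⁻ t in s, gaussianPDF (m₁ + m₂) (v₁ + v₂) t ∂volume := by
        refine setLIntegral_congr_fun hs (fun t _ => ?_)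
        calc ∫⁻ u, gaussianPDF m₁ v₁ u * gaussianPDF m₂ v₂ (t - u) ∂volume
            = ∫⁻ u, gaussianPDF (m₁ + m₂) (v₁ + v₂) t
                * gaussianPDF ((m₁ * v₂ + (t - m₂) * v₁) / (v₁ + v₂)) (v₁ * v₂ / (v₁ + v₂)) u
                ∂volume := by
              refine lintegral_congr fun u => ?_
              simp only [gaussianPDF_def]
              rw [← ENNReal.ofReal_mul (gaussianPDFReal_nonneg _ _ _),
                ← ENNReal.ofReal_mul (gaussianPDFReal_nonneg _ _ _),
                gaussianPDFReal_mul_gaussianPDFReal m₁ m₂ t u h₁ h₂]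
          _ = gaussianPDF (m₁ + m₂) (v₁ + v₂) t := by
              rw [lintegral_const_mul _ (measurable_gaussianPDF _ _),
                lintegral_gaussianPDF_eq_one _ (by positivity), mul_one]
    _ = gaussianReal (m₁ + m₂) (v₁ + v₂) s := (gaussianReal_apply _ hsum s).symm

/-- A linear combination of the coordinates of a product of gaussians is gaussian. -/
lemma pi_gaussian_map_sum : ∀ {n : ℕ} (a c : Fin n → ℝ) (v : ℝ≥0),
    (Measure.pi fun i => gaussianReal (a i) v).map (fun x => ∑ i, c i * x i)
      = gaussianReal (∑ i, c i * a i)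
          ((∑ i, Real.toNNReal ((c i) ^ 2)) * v) := by
  intro n
  induction n with
  | zero =>
      intro a c v
      rw [Measure.pi_of_empty, Measure.map_dirac' (f := fun x : Fin 0 → ℝ => ∑ i, c i * x i) (by fun_prop)]
      simp [gaussianReal_zero_var]
  | succ n ih =>
      intro a c v
      have hmp := (measurePreserving_piFinSuccAbove
        (fun i : Fin (n + 1) => gaussianReal (a i) v) 0).symm
      rw [← hmp.map_eq, Measure.map_map (by fun_prop) hmp.measurable]
      have hcomp : ((fun x : Fin (n + 1) → ℝ => ∑ i, c i * x i)
            ∘ (MeasurableEquiv.piFinSuccAbove (fun _ => ℝ) 0).symm)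
          = (fun p : ℝ × ℝ => p.1 + p.2)
            ∘ (Prod.map (fun u => c 0 * u) (fun w : Fin n → ℝ => ∑ j, c j.succ * w j)) := by
        funext p
        simp only [MeasurableEquiv.piFinSuccAbove_symm_apply, Fin.insertNthEquiv,
          Fin.insertNth_zero, Equiv.coe_fn_mk, Function.comp_apply, Prod.map_apply]
        rw [Fin.sum_univ_succ]
        simp [Fin.cons_zero, Fin.cons_succ, Fin.zero_succAbove]
      rw [hcomp, ← Measure.map_map measurable_add (by fun_prop),
        ← Measure.map_prod_map _ _ (by fun_prop) (by fun_prop),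
        gaussianReal_map_const_mul (c 0)]
      simp only [Fin.zero_succAbove]
      rw [ih (fun j => a j.succ) (fun j => c j.succ) v, map_add_gaussian]
      congr 1
      · exact (Fin.sum_univ_succ (f := fun i => c i * a i)).symm
      · refine NNReal.coe_injective ?_
        push_cast [Real.coe_toNNReal', max_eq_left (sq_nonneg _)]
        rw [Fin.sum_univ_succ]
        ring

lemma stdGaussianCDF_eq_integral (z : ℝ) :
    stdGaussianCDF z = ∫ x in Set.Iic z, gaussianPDFReal 0 1 x := by
  rw [stdGaussianCDF, gaussianReal_apply_eq_integral _ one_ne_zero,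
    ENNReal.toReal_ofReal (setIntegral_nonneg measurableSet_Iic
      (fun x _ => gaussianPDFReal_nonneg _ _ _))]

instance : NullSingletonClass (gaussianReal 0 1) :=
  ⟨fun x => (gaussianReal_absolutelyContinuous 0 one_ne_zero) (Real.volume_singleton)⟩

/-- Gaussian measure of a right tail in terms of the standard CDF. -/
lemma gaussianReal_Ioi (M t : ℝ) {V : ℝ≥0} (hV : V ≠ 0) :
    gaussianReal M V (Set.Ioi t)
      = ENNReal.ofReal (stdGaussianCDF ((M - t) / Real.sqrt V)) := by
  have hVpos : (0 : ℝ) < V := lt_of_le_of_ne V.coe_nonneg (by exact_mod_cast hV.symm)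
  have hsq : (0 : ℝ) < Real.sqrt V := Real.sqrt_pos.mpr hVpos
  have hmap : gaussianReal M V
      = (gaussianReal 0 1).map (fun z => Real.sqrt V * z + M) := by
    have h1 : (gaussianReal 0 1).map (fun z => Real.sqrt V * z)
        = gaussianReal 0 V := by
      rw [gaussianReal_map_const_mul]
      congr 1
      · ring
      · ext
        simp [Real.sq_sqrt V.coe_nonneg]
    have h2 : ((gaussianReal 0 1).map (fun z => Real.sqrt V * z)).map (fun z => z + M)
        = gaussianReal M V := by
      rw [h1, gaussianReal_map_add_const, zero_add]
    rw [← h2, Measure.map_map (by fun_prop) (by fun_prop)]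
    rfl
  rw [hmap, Measure.map_apply (by fun_prop) measurableSet_Ioi]
  have hpre : (fun z => Real.sqrt V * z + M) ⁻¹' Set.Ioi t
      = Set.Ioi ((t - M) / Real.sqrt V) := by
    ext z
    simp only [Set.mem_preimage, Set.mem_Ioi]
    rw [div_lt_iff₀ hsq]
    constructor <;> intro h <;> nlinarith
  rw [hpre]
  have hneg : (gaussianReal 0 1).map (fun z => (-1 : ℝ) * z) = gaussianReal 0 1 := by
    rw [gaussianReal_map_const_mul]
    congr 1
    · ring
    · ext; norm_num
  have hsymm : gaussianReal 0 1 (Set.Ioi ((t - M) / Real.sqrt V))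
      = gaussianReal 0 1 (Set.Iio (-((t - M) / Real.sqrt V))) := by
    conv_lhs => rw [← hneg]
    rw [Measure.map_apply (by fun_prop) measurableSet_Ioi]
    congr 1
    ext z
    simp only [Set.mem_preimage, Set.mem_Ioi, Set.mem_Iio]
    constructor <;> intro h <;> linarith
  rw [hsymm, measure_congr Iio_ae_eq_Iic]
  have : -((t - M) / Real.sqrt V) = (M - t) / Real.sqrt V := by ring
  rw [this, stdGaussianCDF, ENNReal.ofReal_toReal (measure_ne_top _ _)]

lemma continuous_gaussianPDFReal_std : Continuous (gaussianPDFReal 0 1) := by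
  simp only [gaussianPDFReal_def]
  fun_prop

lemma hasDerivAt_stdGaussianCDF (z : ℝ) :
    HasDerivAt stdGaussianCDF (gaussianPDFReal 0 1 z) z := by
  have hint : ∀ x : ℝ, IntegrableOn (gaussianPDFReal 0 1) (Set.Iic x) volume :=
    fun x => (integrable_gaussianPDFReal 0 1).integrableOn
  have key : stdGaussianCDF = fun x => stdGaussianCDF 0 + ∫ t in (0 : ℝ)..x,
      gaussianPDFReal 0 1 t := by
    funext x
    rw [stdGaussianCDF_eq_integral, stdGaussianCDF_eq_integral,
      ← intervalIntegral.integral_Iic_sub_Iic (hint 0) (hint x)]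
    ring
  rw [key]
  refine HasDerivAt.const_add _ ?_
  exact intervalIntegral.integral_hasDerivAt_right
    ((continuous_gaussianPDFReal_std).intervalIntegrable _ _)
    ((continuous_gaussianPDFReal_std.stronglyMeasurable).stronglyMeasurableAtFilter)
    (continuous_gaussianPDFReal_std).continuousAt

/-- Monotonicity of the hockey-stick bound in the sensitivity parameter. -/
lemma hockeyStick_mono (ε : ℝ) {ρ₁ ρ₂ : ℝ} (h₁ : 0 < ρ₁) (h₁₂ : ρ₁ ≤ ρ₂) :
    stdGaussianCDF (ρ₁ / 2 - ε / ρ₁) - Real.exp ε * stdGaussianCDF (-ρ₁ / 2 - ε / ρ₁)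
      ≤ stdGaussianCDF (ρ₂ / 2 - ε / ρ₂) - Real.exp ε * stdGaussianCDF (-ρ₂ / 2 - ε / ρ₂) := by
  set G : ℝ → ℝ := fun ρ =>
    stdGaussianCDF (ρ / 2 - ε / ρ) - Real.exp ε * stdGaussianCDF (-ρ / 2 - ε / ρ) with hGdef
  have hderiv : ∀ ρ : ℝ, 0 < ρ →
      HasDerivAt G (gaussianPDFReal 0 1 (ρ / 2 - ε / ρ)) ρ := by
    intro ρ hρ
    have hu : HasDerivAt (fun ρ : ℝ => ρ / 2 - ε / ρ) (1 / 2 + ε / ρ ^ 2) ρ := by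
      have h1 : HasDerivAt (fun ρ : ℝ => ρ / 2) (1 / 2) ρ := by
        simpa using (hasDerivAt_id ρ).div_const 2
      have h2 : HasDerivAt (fun ρ : ℝ => ε / ρ) (-(ε / ρ ^ 2)) ρ := by
        simpa [div_eq_mul_inv, neg_div] using (hasDerivAt_inv hρ.ne').const_mul ε
      have h3 := h1.sub h2
      rw [sub_neg_eq_add] at h3
      exact h3
    have hv : HasDerivAt (fun ρ : ℝ => -ρ / 2 - ε / ρ) (-(1 / 2) + ε / ρ ^ 2) ρ := by
      have h1 : HasDerivAt (fun ρ : ℝ => -ρ / 2) (-(1 / 2)) ρ := by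
        exact ((hasDerivAt_id ρ).neg.div_const 2).congr_deriv (by ring)
      have h2 : HasDerivAt (fun ρ : ℝ => ε / ρ) (-(ε / ρ ^ 2)) ρ := by
        simpa [div_eq_mul_inv, neg_div] using (hasDerivAt_inv hρ.ne').const_mul ε
      have h3 := h1.sub h2
      rw [sub_neg_eq_add] at h3
      exact h3
    have hΦu := (hasDerivAt_stdGaussianCDF (ρ / 2 - ε / ρ)).comp ρ hu
    have hΦv := ((hasDerivAt_stdGaussianCDF (-ρ / 2 - ε / ρ)).comp ρ hv).const_mul (Real.exp ε)
    have hkey : Real.exp ε * gaussianPDFReal 0 1 (-ρ / 2 - ε / ρ)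
        = gaussianPDFReal 0 1 (ρ / 2 - ε / ρ) := by
      simp only [gaussianPDFReal_def, NNReal.coe_one, mul_one]
      rw [mul_comm (Real.exp ε), mul_assoc, ← Real.exp_add]
      congr 2
      field_simp
      ring
    have := hΦu.sub hΦv
    exact this.congr_deriv (by linear_combination (1 / 2 - ε / ρ ^ 2) * hkey)
  have hmono : StrictMonoOn G (Set.Ioi (0 : ℝ)) := by
    refine strictMonoOn_of_deriv_pos (convex_Ioi 0) ?_ ?_
    · intro x hx
      exact ((hderiv x hx).continuousAt).continuousWithinAt
    · intro x hx
      rw [interior_Ioi] at hx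
      rw [(hderiv x hx).deriv]
      exact gaussianPDFReal_pos _ _ _ one_ne_zero
  rcases eq_or_lt_of_le h₁₂ with h | h
  · subst h
    exact le_refl _
  · exact le_of_lt (hmono (Set.mem_Ioi.mpr h₁) (Set.mem_Ioi.mpr (lt_trans h₁ h)) h)

/-- The Gaussian mechanism `M(X) = f(X) + N(0, σ²I_k)` for a function `f` with
L₂-sensitivity at most `Δ₂ > 0` is `(ε, δ)`-DP whenever
`δ ≥ Φ(Δ₂/(2σ) − εσ/Δ₂) − e^ε Φ(−Δ₂/(2σ) − εσ/Δ₂)`: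
for all neighbouring datasets `X, X'` and measurable `S ⊆ ℝ^k`,
`P(M(X) ∈ S) ≤ e^ε P(M(X') ∈ S) + δ`. -/
theorem gaussian_mechanism_is_DP
    {𝒳 : Type*} {n k : ℕ}
    (f : (Fin n → 𝒳) → EuclideanSpace ℝ (Fin k))
    (Δ σ ε δ : ℝ) (hΔ : 0 < Δ) (hσ : 0 < σ) (hε : 0 ≤ ε)
    (hsens : ∀ X X' : Fin n → 𝒳, (∃ i₀ : Fin n, ∀ i : Fin n, i ≠ i₀ → X i = X' i) →
      ‖f X - f X'‖ ≤ Δ)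
    (hδ : stdGaussianCDF (Δ / (2 * σ) - ε * σ / Δ)
        - Real.exp ε * stdGaussianCDF (-Δ / (2 * σ) - ε * σ / Δ) ≤ δ)
    (X X' : Fin n → 𝒳) (hneighbour : ∃ i₀ : Fin n, ∀ i : Fin n, i ≠ i₀ → X i = X' i)
    (S : Set (Fin k → ℝ)) (hS : MeasurableSet S) :
    (Measure.pi fun i : Fin k => gaussianReal (f X i) (Real.toNNReal (σ ^ 2))) S
      ≤ ENNReal.ofReal (Real.exp ε)
          * (Measure.pi fun i : Fin k => gaussianReal (f X' i) (Real.toNNReal (σ ^ 2))) S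
        + ENNReal.ofReal δ := by
  classical
  have hσ2 : (0 : ℝ) < σ ^ 2 := by positivity
  set v : ℝ≥0 := Real.toNNReal (σ ^ 2) with hvdef
  have hvR : (v : ℝ) = σ ^ 2 := Real.coe_toNNReal _ (le_of_lt hσ2)
  have hv : v ≠ 0 := by
    intro h
    rw [h] at hvR
    simp at hvR
    linarith
  set a : Fin k → ℝ := fun i => f X i with hadef
  set b : Fin k → ℝ := fun i => f X' i with hbdef
  set m : Fin k → ℝ := fun i => a i - b i with hmdef
  set r : ℝ := ‖f X - f X'‖ with hrdef
  have hr_nonneg : 0 ≤ r := norm_nonneg _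
  have hrΔ : r ≤ Δ := hsens X X' hneighbour
  have hr2 : r ^ 2 = ∑ i, m i ^ 2 := by
    rw [hrdef, EuclideanSpace.norm_eq, Real.sq_sqrt (by positivity)]
    refine Finset.sum_congr rfl fun i _ => ?_
    rw [Real.norm_eq_abs, sq_abs]
    congr 1
  set C : ℝ := ∑ i, (a i + b i) / 2 * m i with hCdef
  set c₀ : ℝ := ε * σ ^ 2 + C with hc₀def
  set T : (Fin k → ℝ) → ℝ := fun x => ∑ i, m i * x i with hTdef
  have hT : Measurable T :=
    Finset.measurable_sum Finset.univ fun i _ => by fun_prop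
  set A : Set (Fin k → ℝ) := T ⁻¹' Set.Ioi c₀ with hAdef
  have hA : MeasurableSet A := hT measurableSet_Ioi
  set Λ : Measure (Fin k → ℝ) := Measure.pi fun _ : Fin k => (volume : Measure ℝ) with hΛdef
  set P : (Fin k → ℝ) → ℝ≥0∞ := fun x => ∏ i, gaussianPDF (a i) v (x i) with hPdef
  set Q : (Fin k → ℝ) → ℝ≥0∞ := fun x => ∏ i, gaussianPDF (b i) v (x i) with hQdef
  have hP : Measurable P := Finset.measurable_prod Finset.univ fun i _ =>
    (measurable_gaussianPDF _ _).comp (measurable_pi_apply i)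
  have hQ : Measurable Q := Finset.measurable_prod Finset.univ fun i _ =>
    (measurable_gaussianPDF _ _).comp (measurable_pi_apply i)
  set E : ℝ≥0∞ := ENNReal.ofReal (Real.exp ε) with hEdef
  set μ : Measure (Fin k → ℝ) := Measure.pi fun i : Fin k => gaussianReal (a i) v with hμdef
  set ν : Measure (Fin k → ℝ) := Measure.pi fun i : Fin k => gaussianReal (b i) v with hνdef
  -- pointwise comparison of densities
  have keyReal : ∀ x : Fin k → ℝ, (∏ i, gaussianPDFReal (a i) v (x i))
      = Real.exp ((T x - C) / σ ^ 2) * ∏ i, gaussianPDFReal (b i) v (x i) := by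
    intro x
    have hterm : ∀ i, gaussianPDFReal (a i) v (x i)
        = Real.exp ((m i * x i - (a i + b i) / 2 * m i) / σ ^ 2)
          * gaussianPDFReal (b i) v (x i) := by
      intro i
      simp only [gaussianPDFReal_def, hvR]
      have hexp : Real.exp ((m i * x i - (a i + b i) / 2 * m i) / σ ^ 2)
          * Real.exp (-(x i - b i) ^ 2 / (2 * σ ^ 2))
          = Real.exp (-(x i - a i) ^ 2 / (2 * σ ^ 2)) := by
        rw [← Real.exp_add]
        congr 1
        have hm : m i = a i - b i := rfl
        rw [hm]
        field_simp
        ring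
      rw [← hexp]
      ring
    calc (∏ i, gaussianPDFReal (a i) v (x i))
        = ∏ i, Real.exp ((m i * x i - (a i + b i) / 2 * m i) / σ ^ 2)
            * gaussianPDFReal (b i) v (x i) := Finset.prod_congr rfl fun i _ => hterm i
      _ = (∏ i, Real.exp ((m i * x i - (a i + b i) / 2 * m i) / σ ^ 2))
            * ∏ i, gaussianPDFReal (b i) v (x i) := Finset.prod_mul_distrib
      _ = Real.exp ((T x - C) / σ ^ 2) * ∏ i, gaussianPDFReal (b i) v (x i) := by
          rw [← Real.exp_sum]
          congr 1
          rw [hTdef, hCdef, ← Finset.sum_div, ← Finset.sum_sub_distrib]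
  have hPofReal : ∀ x, P x = ENNReal.ofReal (∏ i, gaussianPDFReal (a i) v (x i)) := by
    intro x
    rw [ENNReal.ofReal_prod_of_nonneg fun i _ => gaussianPDFReal_nonneg _ _ _]
    rfl
  have hQofReal : ∀ x, Q x = ENNReal.ofReal (∏ i, gaussianPDFReal (b i) v (x i)) := by
    intro x
    rw [ENNReal.ofReal_prod_of_nonneg fun i _ => gaussianPDFReal_nonneg _ _ _]
    rfl
  have hQexp : ∀ x, E * Q x
      = ENNReal.ofReal (Real.exp ε * ∏ i, gaussianPDFReal (b i) v (x i)) := by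
    intro x
    rw [hQofReal x, hEdef, ← ENNReal.ofReal_mul (Real.exp_nonneg ε)]
  have hcompare₁ : ∀ x ∉ A, P x ≤ E * Q x := by
    intro x hx
    rw [hPofReal x, hQexp x]
    refine ENNReal.ofReal_le_ofReal ?_
    rw [keyReal x]
    refine mul_le_mul_of_nonneg_right ?_
      (Finset.prod_nonneg fun i _ => gaussianPDFReal_nonneg _ _ _)
    refine Real.exp_le_exp.mpr ?_
    have hx' : T x ≤ c₀ := not_lt.mp hx
    rw [div_le_iff₀ hσ2]
    rw [hc₀def] at hx'
    linarith
  have hcompare₂ : ∀ x ∈ A, E * Q x ≤ P x := by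
    intro x hx
    rw [hPofReal x, hQexp x]
    refine ENNReal.ofReal_le_ofReal ?_
    rw [keyReal x]
    refine mul_le_mul_of_nonneg_right ?_
      (Finset.prod_nonneg fun i _ => gaussianPDFReal_nonneg _ _ _)
    refine Real.exp_le_exp.mpr ?_
    have hx' : c₀ < T x := hx
    rw [le_div_iff₀ hσ2]
    rw [hc₀def] at hx'
    linarith
  -- the key tail bound
  have hstep4 : μ A ≤ E * ν A + ENNReal.ofReal δ := by
    by_cases hr0 : r = 0
    · have hm0 : ∀ i, m i = 0 := by
        intro i
        have h : ∑ j, m j ^ 2 = 0 := by rw [← hr2, hr0]; ring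
        have hz := (Finset.sum_eq_zero_iff_of_nonneg
          (fun j _ => sq_nonneg (m j))).mp h i (Finset.mem_univ i)
        exact pow_eq_zero_iff (by norm_num : 2 ≠ 0) |>.mp hz
      have hAempty : A = (∅ : Set (Fin k → ℝ)) := by
        ext x
        simp only [hAdef, Set.mem_preimage, Set.mem_Ioi, Set.mem_empty_iff_false, iff_false,
          not_lt]
        have hTx : T x = 0 := Finset.sum_eq_zero fun i _ => by rw [hm0 i]; ring
        have hC0 : C = 0 := Finset.sum_eq_zero fun i _ => by rw [hm0 i]; ring
        rw [hTx, hc₀def, hC0]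
        nlinarith
      rw [hAempty]
      simp
    · have hr : 0 < r := lt_of_le_of_ne hr_nonneg (Ne.symm hr0)
      set Ma : ℝ := ∑ i, m i * a i with hMadef
      set Mb : ℝ := ∑ i, m i * b i with hMbdef
      set W : ℝ≥0 := (∑ i, Real.toNNReal (m i ^ 2)) * v with hWdef
      have hWR : (W : ℝ) = r ^ 2 * σ ^ 2 := by
        rw [hWdef]
        push_cast [Real.coe_toNNReal', max_eq_left (sq_nonneg _)]
        rw [← hr2, hvR]
      have hW : W ≠ 0 := by
        intro h
        have h' : (W : ℝ) = 0 := by rw [h]; simp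
        rw [hWR] at h'
        nlinarith [pow_pos hr 2, pow_pos hσ 2]
      have hsqrtW : Real.sqrt W = r * σ := by
        rw [hWR, show r ^ 2 * σ ^ 2 = (r * σ) ^ 2 by ring, Real.sqrt_sq (by positivity)]
      have hμA : μ A = ENNReal.ofReal (stdGaussianCDF ((Ma - c₀) / (r * σ))) := by
        rw [hμdef, hAdef, ← Measure.map_apply hT measurableSet_Ioi,
          hTdef, pi_gaussian_map_sum a m v, ← hMadef, ← hWdef, gaussianReal_Ioi _ _ hW, hsqrtW]
      have hνA : ν A = ENNReal.ofReal (stdGaussianCDF ((Mb - c₀) / (r * σ))) := by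
        rw [hνdef, hAdef, ← Measure.map_apply hT measurableSet_Ioi,
          hTdef, pi_gaussian_map_sum b m v, ← hMbdef]
        have hWb : (∑ i, Real.toNNReal (m i ^ 2)) * v = W := hWdef.symm
        rw [hWb, gaussianReal_Ioi _ _ hW, hsqrtW]
      have hMac : Ma - c₀ = r ^ 2 / 2 - ε * σ ^ 2 := by
        have h1 : Ma - C = ∑ i, m i ^ 2 / 2 := by
          rw [hMadef, hCdef, ← Finset.sum_sub_distrib]
          refine Finset.sum_congr rfl fun i _ => ?_
          have hm : m i = a i - b i := rfl
          rw [hm]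
          ring
        rw [← Finset.sum_div, ← hr2] at h1
        rw [hc₀def]
        linarith
      have hMbc : Mb - c₀ = -(r ^ 2) / 2 - ε * σ ^ 2 := by
        have h1 : Mb - C = ∑ i, -(m i ^ 2) / 2 := by
          rw [hMbdef, hCdef, ← Finset.sum_sub_distrib]
          refine Finset.sum_congr rfl fun i _ => ?_
          have hm : m i = a i - b i := rfl
          rw [hm]
          ring
        have h2 : ∑ i, -(m i ^ 2) / 2 = -(r ^ 2) / 2 := by
          have hneg : ∑ i, -(m i ^ 2) = -∑ i, m i ^ 2 := by simp
          rw [← Finset.sum_div, hneg, ← hr2]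
        rw [hc₀def]
        rw [h2] at h1
        linarith
      have harg1 : (Ma - c₀) / (r * σ) = (r / σ) / 2 - ε / (r / σ) := by
        rw [hMac]
        field_simp
      have harg2 : (Mb - c₀) / (r * σ) = -(r / σ) / 2 - ε / (r / σ) := by
        rw [hMbc]
        field_simp
      have hmono := hockeyStick_mono ε (ρ₁ := r / σ) (ρ₂ := Δ / σ)
        (by positivity) (by gcongr)
      have e1 : (Δ / σ) / 2 - ε / (Δ / σ) = Δ / (2 * σ) - ε * σ / Δ := by
        field_simp
      have e2 : -(Δ / σ) / 2 - ε / (Δ / σ) = -Δ / (2 * σ) - ε * σ / Δ := by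
        field_simp
      rw [e1, e2] at hmono
      have hreal : stdGaussianCDF ((Ma - c₀) / (r * σ))
          ≤ Real.exp ε * stdGaussianCDF ((Mb - c₀) / (r * σ)) + δ := by
        rw [harg1, harg2]
        linarith
      calc μ A = ENNReal.ofReal (stdGaussianCDF ((Ma - c₀) / (r * σ))) := hμA
        _ ≤ ENNReal.ofReal (Real.exp ε * stdGaussianCDF ((Mb - c₀) / (r * σ)) + δ) :=
            ENNReal.ofReal_le_ofReal hreal
        _ ≤ ENNReal.ofReal (Real.exp ε * stdGaussianCDF ((Mb - c₀) / (r * σ)))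
              + ENNReal.ofReal δ := ENNReal.ofReal_add_le
        _ = E * ν A + ENNReal.ofReal δ := by
            rw [hνA, hEdef, ENNReal.ofReal_mul (Real.exp_nonneg ε)]
  -- assembling
  have hμSA : μ (S \ A) ≤ E * ν (S \ A) := by
    rw [hμdef, hνdef, pi_gaussian_apply a hv (hS.diff hA), pi_gaussian_apply b hv (hS.diff hA)]
    calc ∫⁻ x in S \ A, P x ∂Λ
        ≤ ∫⁻ x in S \ A, E * Q x ∂Λ :=
          setLIntegral_mono (hQ.const_mul E) fun x hx => hcompare₁ x hx.2
      _ = E * ∫⁻ x in S \ A, Q x ∂Λ := lintegral_const_mul E hQ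
  set D : ℝ≥0∞ := ∫⁻ x in A, (P x - E * Q x) ∂Λ with hDdef
  have hstep3 : D + E * ν A = μ A := by
    rw [hμdef, hνdef, pi_gaussian_apply a hv hA, pi_gaussian_apply b hv hA, hDdef,
      ← lintegral_const_mul E hQ,
      ← lintegral_add_left (f := fun x => P x - E * Q x) (hP.sub (hQ.const_mul E))]
    refine setLIntegral_congr_fun hA (fun x hx => ?_)
    exact tsub_add_cancel_of_le (hcompare₂ x hx)
  have hDδ : D ≤ ENNReal.ofReal δ := by
    have hfin : E * ν A ≠ ∞ := ENNReal.mul_ne_top ENNReal.ofReal_ne_top (measure_ne_top _ _)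
    refine (ENNReal.add_le_add_iff_right hfin).mp ?_
    rw [hstep3, add_comm (ENNReal.ofReal δ)]
    exact hstep4
  have hμSiA : μ (S ∩ A) ≤ E * ν (S ∩ A) + D := by
    rw [hμdef, hνdef, pi_gaussian_apply a hv (hS.inter hA), pi_gaussian_apply b hv (hS.inter hA)]
    calc ∫⁻ x in S ∩ A, P x ∂Λ
        ≤ ∫⁻ x in S ∩ A, (E * Q x + (P x - E * Q x)) ∂Λ :=
          setLIntegral_mono ((hQ.const_mul E).add (hP.sub (hQ.const_mul E)))
            (fun x _ => le_add_tsub)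
      _ = ∫⁻ x in S ∩ A, E * Q x ∂Λ + ∫⁻ x in S ∩ A, (P x - E * Q x) ∂Λ :=
          lintegral_add_left (hQ.const_mul E) _
      _ ≤ E * ∫⁻ x in S ∩ A, Q x ∂Λ + D := by
          rw [lintegral_const_mul E hQ]
          exact add_le_add_right (lintegral_mono_set Set.inter_subset_right) _
  calc μ S = μ (S ∩ A) + μ (S \ A) := (measure_inter_add_diff S hA).symm
    _ ≤ (E * ν (S ∩ A) + D) + E * ν (S \ A) := add_le_add hμSiA hμSA
    _ = E * (ν (S ∩ A) + ν (S \ A)) + D := by rw [mul_add]; ring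
    _ = E * ν S + D := by rw [measure_inter_add_diff S hA]
    _ ≤ E * ν S + ENNReal.ofReal δ := add_le_add_right hDδ _
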